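/- Let f_ε be as above and let 0 < d < 1. Then there exists α with 0 < α < d such that α = (ε/4)·e^{−f_ε(1−d+α)}; moreover for this α one has 2α·f_ε'(1−d+α) < 1 (interpreting f_ε'(x) = 0 for x ≤ 1−ε). -/

import Mathlib

/-- For `0 < d < 1` there exists `0 < α < d` with `α = (ε/4) e^{-f_ε(1-d+α)}`, and
for this `α` one has `2 α f_ε'(1-d+α) < 1`. -/
theorem stmt12 (ε d : ℝ) (hε : 0 < ε) (hε2 : ε < 1/2) (hd : 0 < d) (hd1 : d < 1)
    (f f' : ℝ → ℝ)
    (hf : ∀ x, f x = if x ≤ 1 - ε then 0 else -Real.log (1 - ((x - 1 + ε) / ε) ^ 2))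
    (hf' : ∀ x, f' x = if x ≤ 1 - ε then 0 else 2 * (x - 1 + ε) / (ε ^ 2 - (x - 1 + ε) ^ 2)) :
    ∃ α : ℝ, 0 < α ∧ α < d ∧ α = (ε / 4) * Real.exp (-(f (1 - d + α))) ∧
      2 * α * f' (1 - d + α) < 1 := by
  by_cases hcase : 5 * ε / 4 ≤ d
  · -- α = ε/4, f vanishes
    refine ⟨ε / 4, by linarith, by linarith, ?_, ?_⟩
    · have hx : 1 - d + ε / 4 ≤ 1 - ε := by linarith
      rw [hf, if_pos hx]
      simp
    · have hx : 1 - d + ε / 4 ≤ 1 - ε := by linarith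
      rw [hf', if_pos hx]
      norm_num
  · push_neg at hcase
    set s : ℝ := Real.sqrt (9 * ε ^ 2 - 4 * ε * d) with hs
    have hpos : (0:ℝ) < 9 * ε ^ 2 - 4 * ε * d := by nlinarith
    have hs2 : s ^ 2 = 9 * ε ^ 2 - 4 * ε * d := Real.sq_sqrt hpos.le
    have hsnn : 0 ≤ s := Real.sqrt_nonneg _
    have hs_gt : 2 * ε < s := by nlinarith
    have hs_lt : s < 3 * ε := by nlinarith
    set t : ℝ := s - 2 * ε with ht
    have ht0 : 0 < t := by simp [ht]; linarith
    have htε : t < ε := by simp [ht]; linarith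
    set α : ℝ := d - ε + t with hα
    have key : α * (4 * ε) = ε ^ 2 - t ^ 2 := by
      simp only [hα, ht]; nlinarith
    have hα0 : 0 < α := by nlinarith
    have hαd : α < d := by simp [hα]; linarith
    have hx : ¬ (1 - d + α ≤ 1 - ε) := by simp [hα]; linarith
    have hxt : (1 - d + α) - 1 + ε = t := by simp [hα]; ring
    have harg : (0:ℝ) < 1 - (t / ε) ^ 2 := by
      have : (t / ε) ^ 2 < 1 := by
        rw [div_pow, div_lt_one (by positivity)]
        nlinarith
      linarith
    refine ⟨α, hα0, hαd, ?_, ?_⟩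
    · rw [hf, if_neg hx, hxt, neg_neg, Real.exp_log harg]
      have hεne : ε ≠ 0 := ne_of_gt hε
      field_simp
      nlinarith [key]
    · rw [hf', if_neg hx, hxt]
      have hden : (0:ℝ) < ε ^ 2 - t ^ 2 := by nlinarith
      have : 2 * α * (2 * t / (ε ^ 2 - t ^ 2)) = t / ε := by
        field_simp
        linear_combination key
      rw [this, div_lt_one hε]
      exact htε
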